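/- Let m ≥ 1 and let q : F_2^{2m} → F_2 be the quadratic function q(x) = ∑_{k<m} x_k x_{m+k}. Then for all c, c' ∈ F_2^{2m} with q(c) = q(c') = 1 there exists an invertible F_2-linear map A on F_2^{2m} such that q(A x) + ⟨c, A x⟩ = q(x) + ⟨c', x⟩ for all x ∈ F_2^{2m}. -/

import Mathlib

open Finset

/-- Inner product on `F_2^n`. -/
def dotp {n : ℕ} (x y : Fin n → ZMod 2) : ZMod 2 := ∑ i, x i * y i

/-- Hamming weight of a Boolean function: the cardinality of its support. -/
def wt {n : ℕ} (f : (Fin n → ZMod 2) → ZMod 2) : ℕ :=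
  (Finset.univ.filter fun x => f x = 1).card

/-- Walsh–Hadamard transform of a Boolean function. -/
def walsh {n : ℕ} (f : (Fin n → ZMod 2) → ZMod 2) (x : Fin n → ZMod 2) : ℤ :=
  ∑ y : Fin n → ZMod 2, (-1 : ℤ) ^ (f y + dotp x y).val

/-- A Boolean function on `F_2^(2m)` is bent if its Walsh–Hadamard transform has constant
absolute value `2^m`. -/
def IsBent {m : ℕ} (f : (Fin (2 * m) → ZMod 2) → ZMod 2) : Prop :=
  ∀ x, |walsh f x| = 2 ^ m

/-- The dual of a bent function: `f̂ x = 0` if `W_f x = 2^m`, and `1` otherwise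
(for bent `f` the other case is exactly `W_f x = -2^m`). -/
def dual {m : ℕ} (f : (Fin (2 * m) → ZMod 2) → ZMod 2) :
    (Fin (2 * m) → ZMod 2) → ZMod 2 :=
  fun x => if walsh f x = 2 ^ m then 0 else 1

/-- The weight class of a bent function on `F_2^(2m)`:
`0` if its weight is `2^(2m-1) - 2^(m-1)`, and `1` otherwise. -/
def wc {m : ℕ} (f : (Fin (2 * m) → ZMod 2) → ZMod 2) : ZMod 2 :=
  if wt f = 2 ^ (2 * m - 1) - 2 ^ (m - 1) then 0 else 1

/-- The Cayley graph of a Boolean function: distinct `x`, `y` are adjacent iff `f (x+y) = 1`. -/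
def cayley {n : ℕ} (f : (Fin n → ZMod 2) → ZMod 2) : SimpleGraph (Fin n → ZMod 2) where
  Adj x y := x ≠ y ∧ f (x + y) = 1
  symm := ⟨fun x y h => ⟨h.1.symm, by rw [add_comm]; exact h.2⟩⟩
  loopless := ⟨fun x h => h.1 rfl⟩

instance cayleyAdjDecidable {n : ℕ} (f : (Fin n → ZMod 2) → ZMod 2) :
    DecidableRel (cayley f).Adj :=
  fun x y => inferInstanceAs (Decidable (x ≠ y ∧ f (x + y) = 1))

/-- The standard quadratic bent function `q x = ∑_{k<m} x_k x_{m+k}` on `F_2^(2m)`. -/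
def quadq {m : ℕ} (x : Fin (2 * m) → ZMod 2) : ZMod 2 :=
  ∑ k : Fin m, x ⟨k.1, by have := k.isLt; omega⟩ * x ⟨m + k.1, by have := k.isLt; omega⟩

namespace BentAux

abbrev Vm (m : ℕ) := Fin m → ZMod 2
abbrev Wm (m : ℕ) := Vm m × Vm m
lemma h2 : (2 : ZMod 2) = 0 := rfl
variable {m : ℕ}
def dm (s t : Vm m) : ZMod 2 := ∑ k, s k * t k
lemma dm_comm (s t : Vm m) : dm s t = dm t s :=
  Finset.sum_congr rfl fun k _ => mul_comm _ _
lemma dm_add_left (s s' t : Vm m) : dm (s + s') t = dm s t + dm s' t := by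
  simp [dm, add_mul, Finset.sum_add_distrib]
lemma dm_add_right (s t t' : Vm m) : dm s (t + t') = dm s t + dm s t' := by
  simp [dm, mul_add, Finset.sum_add_distrib]
lemma dm_smul_left (c : ZMod 2) (s t : Vm m) : dm (c • s) t = c * dm s t := by
  simp [dm, Finset.mul_sum, mul_assoc]
lemma dm_smul_right (c : ZMod 2) (s t : Vm m) : dm s (c • t) = c * dm s t := by
  simp [dm, Finset.mul_sum]; exact Finset.sum_congr rfl fun k _ => by ring
def ee (i : Fin m) : Vm m := fun j => if j = i then 1 else 0
lemma dm_ee_right (s : Vm m) (i : Fin m) : dm s (ee i) = s i := by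
  simp [dm, ee, mul_ite, Finset.sum_ite_eq']
lemma dm_ee_left (t : Vm m) (i : Fin m) : dm (ee i) t = t i := by
  rw [dm_comm]; exact dm_ee_right t i
def quadW (p : Wm m) : ZMod 2 := dm p.1 p.2
def dpW (c p : Wm m) : ZMod 2 := dm c.1 p.1 + dm c.2 p.2
def sw (p : Wm m) : Wm m := (p.2, p.1)
lemma quadW_sw (p : Wm m) : quadW (sw p) = quadW p := dm_comm _ _
lemma polar (c r : Wm m) : quadW (r + sw c) = quadW r + dpW c r + quadW c := by
  simp only [quadW, dpW, sw, dm, Prod.fst_add, Prod.snd_add, Pi.add_apply]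
  rw [← Finset.sum_add_distrib, ← Finset.sum_add_distrib, ← Finset.sum_add_distrib]
  exact Finset.sum_congr rfl fun k _ => by ring

def mkInvol (f : Wm m → Wm m) (hadd : ∀ p q, f (p + q) = f p + f q)
    (hsmul : ∀ (c : ZMod 2) p, f (c • p) = c • f p) (hinv : ∀ p, f (f p) = p) :
    Wm m ≃ₗ[ZMod 2] Wm m :=
  { toFun := f, map_add' := hadd, map_smul' := hsmul, invFun := f,
    left_inv := hinv, right_inv := hinv }

-- generator G
def gG (i : Fin m) (u : Vm m) : Wm m → Wm m :=
  fun p => (p.1 + p.1 i • u, p.2 + dm p.2 u • ee i)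

lemma gG_add (i : Fin m) (u : Vm m) (p q : Wm m) : gG i u (p + q) = gG i u p + gG i u q := by
  refine Prod.ext ?_ ?_ <;>
    simp only [gG, Prod.fst_add, Prod.snd_add, Pi.add_apply, dm_add_left] <;>
    funext j <;> simp only [Pi.add_apply, Pi.smul_apply, smul_eq_mul] <;> ring

lemma gG_smul (i : Fin m) (u : Vm m) (c : ZMod 2) (p : Wm m) :
    gG i u (c • p) = c • gG i u p := by
  refine Prod.ext ?_ ?_ <;>
    simp only [gG, Prod.smul_fst, Prod.smul_snd, Pi.smul_apply, smul_eq_mul, dm_smul_left] <;>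
    funext j <;> simp only [Pi.add_apply, Pi.smul_apply, smul_eq_mul] <;> ring

lemma gG_invol (i : Fin m) (u : Vm m) (hui : u i = 0) (p : Wm m) : gG i u (gG i u p) = p := by
  refine Prod.ext ?_ ?_
  · show (p.1 + p.1 i • u) + (p.1 + p.1 i • u) i • u = p.1
    funext j
    simp only [Pi.add_apply, Pi.smul_apply, smul_eq_mul, hui]
    linear_combination (p.1 i * u j) * h2
  · show (p.2 + dm p.2 u • ee i) + dm (p.2 + dm p.2 u • ee i) u • ee i = p.2
    funext j
    simp only [Pi.add_apply, Pi.smul_apply, smul_eq_mul, dm_add_left, dm_smul_left,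
      dm_ee_left, hui]
    linear_combination (dm p.2 u * ee i j) * h2

lemma gG_quad (i : Fin m) (u : Vm m) (hui : u i = 0) (p : Wm m) :
    quadW (gG i u p) = quadW p := by
  show dm (p.1 + p.1 i • u) (p.2 + dm p.2 u • ee i) = dm p.1 p.2
  rw [dm_add_left, dm_add_right, dm_add_right, dm_smul_left, dm_smul_right, dm_smul_right,
    dm_smul_left, dm_ee_right, dm_ee_right, hui, dm_comm u p.2]
  linear_combination (p.1 i * dm p.2 u) * h2

-- generator H
def gH (i : Fin m) (u : Vm m) : Wm m → Wm m :=
  fun p => (p.1, p.2 + p.1 i • u + dm p.1 u • ee i)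

lemma gH_add (i : Fin m) (u : Vm m) (p q : Wm m) : gH i u (p + q) = gH i u p + gH i u q := by
  refine Prod.ext rfl ?_
  simp only [gH, Prod.fst_add, Prod.snd_add, Pi.add_apply, dm_add_left]
  funext j; simp only [Pi.add_apply, Pi.smul_apply, smul_eq_mul]; ring

lemma gH_smul (i : Fin m) (u : Vm m) (c : ZMod 2) (p : Wm m) :
    gH i u (c • p) = c • gH i u p := by
  refine Prod.ext rfl ?_
  simp only [gH, Prod.smul_fst, Prod.smul_snd, Pi.smul_apply, smul_eq_mul, dm_smul_left]
  funext j; simp only [Pi.add_apply, Pi.smul_apply, smul_eq_mul]; ring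

lemma gH_invol (i : Fin m) (u : Vm m) (p : Wm m) : gH i u (gH i u p) = p := by
  refine Prod.ext rfl ?_
  show (p.2 + p.1 i • u + dm p.1 u • ee i) + p.1 i • u + dm p.1 u • ee i = p.2
  funext j
  simp only [Pi.add_apply, Pi.smul_apply, smul_eq_mul]
  linear_combination (p.1 i * u j + dm p.1 u * ee i j) * h2

lemma gH_quad (i : Fin m) (u : Vm m) (p : Wm m) : quadW (gH i u p) = quadW p := by
  show dm p.1 (p.2 + p.1 i • u + dm p.1 u • ee i) = dm p.1 p.2
  rw [dm_add_right, dm_add_right, dm_smul_right, dm_smul_right, dm_ee_right]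
  linear_combination (p.1 i * dm p.1 u) * h2

-- generator K (coordinate swap)
def gK (i i' : Fin m) : Wm m → Wm m :=
  fun p => (p.1 ∘ Equiv.swap i i', p.2 ∘ Equiv.swap i i')

lemma gK_add (i i' : Fin m) (p q : Wm m) : gK i i' (p + q) = gK i i' p + gK i i' q := rfl
lemma gK_smul (i i' : Fin m) (c : ZMod 2) (p : Wm m) : gK i i' (c • p) = c • gK i i' p := rfl

lemma gK_invol (i i' : Fin m) (p : Wm m) : gK i i' (gK i i' p) = p := by
  refine Prod.ext ?_ ?_ <;> funext j <;>
    simp [gK, Function.comp, Equiv.swap_apply_self]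

lemma gK_quad (i i' : Fin m) (p : Wm m) : quadW (gK i i' p) = quadW p := by
  show (∑ k, p.1 (Equiv.swap i i' k) * p.2 (Equiv.swap i i' k)) = dm p.1 p.2
  exact Equiv.sum_comp (Equiv.swap i i') (fun k => p.1 k * p.2 k)

lemma ee_comp_swap (i i' : Fin m) : ee i ∘ Equiv.swap i i' = ee i' := by
  funext j
  simp only [ee, Function.comp_apply]
  by_cases h : j = i'
  · simp [h, Equiv.swap_apply_right]
  · have hne : Equiv.swap i i' j ≠ i := by
      intro hc
      rw [Equiv.apply_eq_iff_eq_symm_apply, Equiv.symm_swap, Equiv.swap_apply_left] at hc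
      exact h hc
    simp [h, hne]

lemma exists_index {a b : Vm m} (h : dm a b = 1) : ∃ i, a i = 1 ∧ b i = 1 := by
  by_contra hne
  push_neg at hne
  have hz : ∀ i, a i * b i = 0 := by
    intro i
    have hall : ∀ z w : ZMod 2, (z = 1 → w ≠ 1) → z * w = 0 := by decide
    exact hall _ _ (hne i)
  rw [dm, Finset.sum_congr rfl (fun i _ => hz i), Finset.sum_const_zero] at h
  exact one_ne_zero h.symm

lemma exists_equiv_to_std (v : Wm m) (hv : quadW v = 1) :
    ∃ (i : Fin m) (Φ : Wm m ≃ₗ[ZMod 2] Wm m),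
      (∀ p, quadW (Φ p) = quadW p) ∧ Φ v = (ee i, ee i) := by
  obtain ⟨i, hai, hbi⟩ := exists_index (a := v.1) (b := v.2) hv
  set a := v.1 with ha
  set b := v.2 with hb
  set u : Vm m := a + ee i with hu
  have hui : u i = 0 := by
    simp only [hu, Pi.add_apply, hai, ee, if_pos rfl]
    decide
  let EG : Wm m ≃ₗ[ZMod 2] Wm m := mkInvol (gG i u) (gG_add i u) (gG_smul i u) (gG_invol i u hui)
  set b' : Vm m := b + dm b u • ee i with hb'
  have hEGv : EG v = (ee i, b') := by
    have h1 : a + a i • u = ee i := by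
      funext j
      simp only [hai, Pi.add_apply, Pi.smul_apply, smul_eq_mul, hu, one_mul]
      linear_combination (a j) * h2
    show gG i u v = (ee i, b')
    rw [gG, ← ha, ← hb, h1, ← hb']
  have hdbu : dm b u = 0 := by
    have hab : dm a b = 1 := hv
    rw [hu, dm_add_right, dm_ee_right, dm_comm, hab, hbi]
    decide
  have hb'i : b' i = 1 := by
    simp only [hb', hdbu, zero_smul, add_zero]
    exact hbi
  set u' : Vm m := b' + ee i with hu'
  have hu'i : u' i = 0 := by
    simp only [hu', Pi.add_apply, hb'i, ee, if_pos rfl]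
    decide
  let EH : Wm m ≃ₗ[ZMod 2] Wm m := mkInvol (gH i u') (gH_add i u') (gH_smul i u') (gH_invol i u')
  refine ⟨i, EG.trans EH, ?_, ?_⟩
  · intro p
    show quadW (gH i u' (EG p)) = quadW p
    rw [gH_quad]
    exact gG_quad i u hui p
  · show gH i u' (EG v) = (ee i, ee i)
    rw [hEGv]
    refine Prod.ext rfl ?_
    show b' + (ee i) i • u' + dm (ee i) u' • ee i = ee i
    have heei : ee i i = (1 : ZMod 2) := if_pos rfl
    rw [dm_ee_left, hu'i, heei, one_smul, zero_smul, add_zero, hu']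
    funext j
    simp only [Pi.add_apply]
    linear_combination (b' j) * h2

lemma exists_equiv_move (v w : Wm m) (hv : quadW v = 1) (hw : quadW w = 1) :
    ∃ Φ : Wm m ≃ₗ[ZMod 2] Wm m, (∀ p, quadW (Φ p) = quadW p) ∧ Φ v = w := by
  obtain ⟨i, Φv, hΦv, hveq⟩ := exists_equiv_to_std v hv
  obtain ⟨i', Φw, hΦw, hweq⟩ := exists_equiv_to_std w hw
  let K : Wm m ≃ₗ[ZMod 2] Wm m :=
    mkInvol (gK i i') (gK_add i i') (gK_smul i i') (gK_invol i i')
  refine ⟨(Φv.trans K).trans Φw.symm, ?_, ?_⟩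
  · intro p
    show quadW (Φw.symm (gK i i' (Φv p))) = quadW p
    have := hΦw (Φw.symm (gK i i' (Φv p)))
    rw [Φw.apply_symm_apply] at this
    rw [← this, gK_quad, hΦv]
  · show Φw.symm (gK i i' (Φv v)) = w
    rw [hveq]
    have hK : gK i i' (ee i, ee i) = ((ee i' : Vm m), (ee i' : Vm m)) := by
      refine Prod.ext ?_ ?_ <;> exact ee_comp_swap i i'
    rw [hK, ← hweq, Φw.symm_apply_apply]

def toW : (Fin (2 * m) → ZMod 2) ≃ₗ[ZMod 2] Wm m where
  toFun x := (fun k => x ⟨k.1, by have := k.2; omega⟩, fun k => x ⟨m + k.1, by have := k.2; omega⟩)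
  map_add' x y := rfl
  map_smul' c x := rfl
  invFun p := fun j => if h : j.1 < m then p.1 ⟨j.1, h⟩ else p.2 ⟨j.1 - m, by have := j.2; omega⟩
  left_inv x := by
    funext j
    by_cases h : j.1 < m
    · simp only [dif_pos h]
    · simp only [dif_neg h]
      exact congrArg x (Fin.ext (show m + (j.1 - m) = j.1 by omega))
  right_inv p := by
    refine Prod.ext ?_ ?_ <;> funext k
    · simp only [dif_pos k.2]
    · have h : ¬ (m + k.1 < m) := by omega
      simp only [dif_neg h]
      exact congrArg p.2 (Fin.ext (show m + k.1 - m = k.1 by omega))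

lemma quadq_toW (x : Fin (2 * m) → ZMod 2) : quadq x = quadW (toW x) := rfl

lemma dotp_toW (c x : Fin (2 * m) → ZMod 2) : dotp c x = dpW (toW c) (toW x) := by
  rw [dotp, ← Equiv.sum_comp (finSumFinEquiv.trans (finCongr (two_mul m).symm))
    (fun i => c i * x i), Fintype.sum_sum_type]
  rfl

end BentAux

/-- for `c`, `c'` with `q c = q c' = 1` there is an invertible linear map `A`
with `q (A x) + ⟨c, A x⟩ = q x + ⟨c', x⟩` for all `x`. -/
theorem quadratic_linear_equiv_of_qc_qc'_one {m : ℕ} (hm : 1 ≤ m)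
    (c c' : Fin (2 * m) → ZMod 2) (hc : quadq c = 1) (hc' : quadq c' = 1) :
    ∃ A : (Fin (2 * m) → ZMod 2) ≃ₗ[ZMod 2] (Fin (2 * m) → ZMod 2),
      ∀ x, quadq (A x) + dotp c (A x) = quadq x + dotp c' x := by
  classical
  obtain ⟨Φ, hΦ, hmove⟩ := BentAux.exists_equiv_move (BentAux.sw (BentAux.toW c'))
    (BentAux.sw (BentAux.toW c))
    (by rw [BentAux.quadW_sw, ← BentAux.quadq_toW]; exact hc')
    (by rw [BentAux.quadW_sw, ← BentAux.quadq_toW]; exact hc)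
  refine ⟨(BentAux.toW.trans Φ).trans BentAux.toW.symm, fun x => ?_⟩
  set A := (BentAux.toW.trans Φ).trans BentAux.toW.symm with hA
  set p := BentAux.toW x with hp
  have hAx : BentAux.toW (A x) = Φ p := by
    show BentAux.toW (BentAux.toW.symm (Φ (BentAux.toW x))) = Φ p
    rw [BentAux.toW.apply_symm_apply, hp]
  have h1 := BentAux.polar (BentAux.toW c) (Φ p)
  have h2p := BentAux.polar (BentAux.toW c') p
  have h3 : BentAux.quadW (Φ p + BentAux.sw (BentAux.toW c)) =
      BentAux.quadW (p + BentAux.sw (BentAux.toW c')) := by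
    rw [← hmove, ← map_add, hΦ]
  have hqc : BentAux.quadW (BentAux.toW c) = 1 := by rw [← BentAux.quadq_toW]; exact hc
  have hqc' : BentAux.quadW (BentAux.toW c') = 1 := by rw [← BentAux.quadq_toW]; exact hc'
  rw [BentAux.quadq_toW (A x), hAx, BentAux.dotp_toW c (A x), hAx,
    BentAux.quadq_toW x, BentAux.dotp_toW c' x, ← hp]
  linear_combination h2p - h1 + h3 + hqc' - hqc
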